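/- Let d ≥ 3 be odd. Then there exist vectors p'_1, …, p'_{d+1} ∈ ℝ^d with Σ_{i=1}^{d+1} |p'_i| = d+1 such that (1/2)·max{ |Σ_{i=1}^{d+1} ε_i p'_i| : ε_i ∈ {−1, 1} } < (d+1)/(2√d). That is, among all rhombic dodecahedra with the mean width of the regular one, the regular rhombic dodecahedron does not minimize the circumradius when d is odd. -/

import Mathlib

/-- The maximum of `‖∑ᵢ εᵢ • pᵢ‖` over all sign vectors `ε ∈ {-1, 1}ⁿ`
(twice the circumradius of the zonotope `∑ᵢ [0, pᵢ]`). -/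
noncomputable def signMax {d n : ℕ} (p : Fin n → EuclideanSpace ℝ (Fin d)) : ℝ :=
  sSup {r : ℝ | ∃ ε : Fin n → ℝ, (∀ i, ε i = 1 ∨ ε i = -1) ∧ r = ‖∑ i, ε i • p i‖}

/- ### Auxiliary construction.

We take three unit vectors at mutual angles of 120° in the first two coordinates,
together with the `d - 2` standard basis vectors `e₂, …, e_{d-1}`.  All `d + 1`
generators are unit vectors, so the sum of their norms is `d + 1`, while every
signed sum has squared norm at most `4 + (d - 2) = d + 2 < (d+1)²/d`. -/

/-- Coordinates of the generators: `vcoord i j` is the `j`-th coordinate of the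
`i`-th generator. -/
noncomputable def vcoord : ℕ → ℕ → ℝ := fun i j =>
  if i = 0 then (if j = 0 then 1 else 0)
  else if i = 1 then (if j = 0 then -(1/2) else if j = 1 then Real.sqrt 3 / 2 else 0)
  else if i = 2 then (if j = 0 then -(1/2) else if j = 1 then -(Real.sqrt 3 / 2) else 0)
  else if j + 1 = i then 1 else 0

/-- The generators themselves, as elements of `EuclideanSpace ℝ (Fin d)`. -/
noncomputable def pvec (d : ℕ) : Fin (d + 1) → EuclideanSpace ℝ (Fin d) :=
  fun i => WithLp.toLp 2 (fun j => vcoord (i : ℕ) (j : ℕ))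

lemma sum_two_aux {n : ℕ} (f : Fin n → ℝ) (h0 : 0 < n) (h1 : 1 < n)
    (h : ∀ j : Fin n, 2 ≤ (j : ℕ) → f j = 0) :
    ∑ j, f j = f ⟨0, h0⟩ + f ⟨1, h1⟩ := by
  have hne : (⟨0, h0⟩ : Fin n) ≠ ⟨1, h1⟩ := by simp [Fin.ext_iff]
  rw [← Finset.sum_subset (Finset.subset_univ ({⟨0, h0⟩, ⟨1, h1⟩} : Finset (Fin n)))
      (by intro x _ hx
          apply h
          simp only [Finset.mem_insert, Finset.mem_singleton, Fin.ext_iff] at hx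
          omega),
    Finset.sum_pair hne]

lemma sum_three_aux {n : ℕ} (f : Fin n → ℝ) (h0 : 0 < n) (h1 : 1 < n) (h2 : 2 < n)
    (h : ∀ j : Fin n, 3 ≤ (j : ℕ) → f j = 0) :
    ∑ j, f j = f ⟨0, h0⟩ + f ⟨1, h1⟩ + f ⟨2, h2⟩ := by
  rw [← Finset.sum_subset (Finset.subset_univ ({⟨0, h0⟩, ⟨1, h1⟩, ⟨2, h2⟩} : Finset (Fin n)))
      (by intro x _ hx
          apply h
          simp only [Finset.mem_insert, Finset.mem_singleton, Fin.ext_iff] at hx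
          omega)]
  rw [Finset.sum_insert (by simp [Fin.ext_iff]), Finset.sum_pair (by simp [Fin.ext_iff]),
    add_assoc]

lemma sqrt3_sq_aux : (Real.sqrt 3) ^ 2 = 3 := Real.sq_sqrt (by norm_num)

/-- Each generator is a unit vector. -/
lemma pnorm_aux (d : ℕ) (hd : 3 ≤ d) (i : Fin (d + 1)) : ‖pvec d i‖ = 1 := by
  have h0 : 0 < d := by omega
  have h1 : 1 < d := by omega
  rw [EuclideanSpace.norm_eq]
  rcases i with ⟨k, hk⟩
  have hsum : ∑ j : Fin d, ‖pvec d ⟨k, hk⟩ j‖ ^ 2 = 1 := by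
    rcases Nat.lt_or_ge k 3 with h3 | h3
    · interval_cases k
      · rw [sum_two_aux _ h0 h1 (by
          intro j hj
          have : (j : ℕ) ≠ 0 := by omega
          simp [pvec, vcoord, this])]
        simp [pvec, vcoord]
      · rw [sum_two_aux _ h0 h1 (by
          intro j hj
          have e0 : (j : ℕ) ≠ 0 := by omega
          have e1 : (j : ℕ) ≠ 1 := by omega
          simp [pvec, vcoord, e0, e1])]
        simp only [pvec, vcoord]
        norm_num
        rw [abs_of_nonneg (by positivity), div_pow, sqrt3_sq_aux]
        norm_num
      · rw [sum_two_aux _ h0 h1 (by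
          intro j hj
          have e0 : (j : ℕ) ≠ 0 := by omega
          have e1 : (j : ℕ) ≠ 1 := by omega
          simp [pvec, vcoord, e0, e1])]
        simp only [pvec, vcoord]
        norm_num
        rw [abs_of_nonneg (by positivity), div_pow, sqrt3_sq_aux]
        norm_num
    · have hk1 : k - 1 < d := by omega
      rw [Finset.sum_eq_single_of_mem (⟨k - 1, hk1⟩ : Fin d) (Finset.mem_univ _)
        (by
          intro b _ hb
          have e3 : (b : ℕ) + 1 ≠ k := by
            intro hc; apply hb; apply Fin.ext; simp; omega
          have hz : vcoord k (b : ℕ) = 0 := by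
            unfold vcoord; split_ifs <;> first | rfl | omega
          simp [pvec, hz])]
      have e0 : k ≠ 0 := by omega
      have e1 : k ≠ 1 := by omega
      have e2 : k ≠ 2 := by omega
      have e3 : (k - 1) + 1 = k := by omega
      simp [pvec, vcoord, e0, e1, e2, e3]
  rw [hsum, Real.sqrt_one]

lemma coord_eq_aux (d : ℕ) (ε : Fin (d+1) → ℝ) (j : Fin d) :
    (∑ i, ε i • pvec d i) j = ∑ i, ε i * vcoord (i : ℕ) (j : ℕ) := by
  have : (∑ i, ε i • pvec d i) j = ∑ i, ε i * pvec d i j := by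
    induction (Finset.univ : Finset (Fin (d+1))) using Finset.cons_induction with
    | empty => simp
    | cons a s ha ih => rw [Finset.sum_cons, Finset.sum_cons, ← ih]; rfl
  rw [this]; rfl

lemma coord_ge2_aux (d : ℕ) (hd : 3 ≤ d) (ε : Fin (d+1) → ℝ) (j : Fin d) (hj : 2 ≤ (j : ℕ)) :
    (∑ i, ε i • pvec d i) j = ε ⟨(j : ℕ) + 1, by omega⟩ := by
  rw [coord_eq_aux d]
  rw [Finset.sum_eq_single_of_mem (⟨(j : ℕ) + 1, by omega⟩ : Fin (d+1)) (Finset.mem_univ _)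
    (by
      intro b _ hb
      rcases b with ⟨k, hk⟩
      have e3 : (j : ℕ) + 1 ≠ k := by
        intro hc; apply hb; apply Fin.ext; simp; omega
      have hz : vcoord k (j : ℕ) = 0 := by
        unfold vcoord; split_ifs <;> first | rfl | omega
      simp [hz])]
  have e0 : (j : ℕ) + 1 ≠ 0 := by omega
  have e1 : (j : ℕ) + 1 ≠ 1 := by omega
  have e2 : (j : ℕ) + 1 ≠ 2 := by omega
  have f0 : (j : ℕ) ≠ 0 := by omega
  have f1 : (j : ℕ) ≠ 1 := by omega
  simp [vcoord, e0, e1, e2, f0, f1]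

lemma coord_zero_aux (d : ℕ) (hd : 3 ≤ d) (ε : Fin (d+1) → ℝ) (j : Fin d) (hj : (j : ℕ) = 0) :
    (∑ i, ε i • pvec d i) j
      = ε ⟨0, by omega⟩ - ε ⟨1, by omega⟩ / 2 - ε ⟨2, by omega⟩ / 2 := by
  rw [coord_eq_aux d]
  rw [sum_three_aux _ (by omega) (by omega) (by omega)
    (by
      intro b hb
      have hz : vcoord (b : ℕ) (j : ℕ) = 0 := by
        unfold vcoord; split_ifs <;> first | rfl | omega
      simp [hz])]
  simp [vcoord, hj]
  ring

lemma coord_one_aux (d : ℕ) (hd : 3 ≤ d) (ε : Fin (d+1) → ℝ) (j : Fin d) (hj : (j : ℕ) = 1) :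
    (∑ i, ε i • pvec d i) j
      = (ε ⟨1, by omega⟩ - ε ⟨2, by omega⟩) * (Real.sqrt 3 / 2) := by
  rw [coord_eq_aux d]
  rw [sum_three_aux _ (by omega) (by omega) (by omega)
    (by
      intro b hb
      have hz : vcoord (b : ℕ) (j : ℕ) = 0 := by
        unfold vcoord; split_ifs <;> first | rfl | omega
      simp [hz])]
  simp [vcoord, hj]
  ring

/-- Every signed sum of the generators has norm at most `√(d+2)`. -/
lemma signsum_le_aux (d : ℕ) (hd : 3 ≤ d) (ε : Fin (d+1) → ℝ)
    (hε : ∀ i, ε i = 1 ∨ ε i = -1) :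
    ‖∑ i, ε i • pvec d i‖ ≤ Real.sqrt ((d : ℝ) + 2) := by
  have h0 : 0 < d := by omega
  have h1 : 1 < d := by omega
  set s := ∑ i, ε i • pvec d i with hs
  rw [EuclideanSpace.norm_eq]
  apply Real.sqrt_le_sqrt
  have key : ∑ j : Fin d, ‖s j‖ ^ 2 = ∑ j : Fin d, (‖s j‖ ^ 2 - 1) + d := by
    rw [Finset.sum_sub_distrib]
    simp
  have hsq : ∀ i, ε i ^ 2 = 1 := by
    intro i; rcases hε i with h | h <;> rw [h] <;> norm_num
  have hzero : ∀ j : Fin d, 2 ≤ (j : ℕ) → ‖s j‖ ^ 2 - 1 = 0 := by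
    intro j hj
    rw [hs, coord_ge2_aux d hd ε j hj, Real.norm_eq_abs, sq_abs, hsq]
    ring
  have htwo : ∑ j : Fin d, (‖s j‖ ^ 2 - 1)
      = (‖s ⟨0, h0⟩‖ ^ 2 - 1) + (‖s ⟨1, h1⟩‖ ^ 2 - 1) :=
    sum_two_aux _ h0 h1 hzero
  set a := ε ⟨0, by omega⟩
  set b := ε ⟨1, by omega⟩
  set c := ε ⟨2, by omega⟩
  have ha : a ^ 2 = 1 := hsq _
  have hb : b ^ 2 = 1 := hsq _
  have hc : c ^ 2 = 1 := hsq _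
  have hv0 : s ⟨0, h0⟩ = a - b / 2 - c / 2 := coord_zero_aux d hd ε _ rfl
  have hv1 : s ⟨1, h1⟩ = (b - c) * (Real.sqrt 3 / 2) := coord_one_aux d hd ε _ rfl
  have hbound : ‖s ⟨0, h0⟩‖ ^ 2 + ‖s ⟨1, h1⟩‖ ^ 2 ≤ 4 := by
    rw [hv0, hv1, Real.norm_eq_abs, Real.norm_eq_abs, sq_abs, sq_abs]
    have h3 : ((b - c) * (Real.sqrt 3 / 2)) ^ 2 = (b - c) ^ 2 * (3 / 4) := by
      rw [mul_pow, div_pow, sqrt3_sq_aux]; ring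
    rw [h3]
    have hA : a = 1 ∨ a = -1 := hε ⟨0, by omega⟩
    have hB : b = 1 ∨ b = -1 := hε ⟨1, by omega⟩
    have hC : c = 1 ∨ c = -1 := hε ⟨2, by omega⟩
    rcases hA with h | h <;> rcases hB with h' | h' <;> rcases hC with h'' | h'' <;>
      rw [h, h', h''] <;> norm_num
  rw [key, htwo]
  linarith

theorem exists_rhombic_dodecahedron_circumradius_lt_regular (d : ℕ) (hd : 3 ≤ d)
    (hodd : Odd d) :
    ∃ p' : Fin (d + 1) → EuclideanSpace ℝ (Fin d),
      (∑ i, ‖p' i‖ = (d : ℝ) + 1) ∧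
      (1 / 2) * signMax p' < ((d : ℝ) + 1) / (2 * Real.sqrt d) := by
  refine ⟨pvec d, ?_, ?_⟩
  · simp [pnorm_aux d hd]
  · have hd0 : (0 : ℝ) < d := by positivity
    have hsd : 0 < Real.sqrt d := Real.sqrt_pos.2 hd0
    have hsup : signMax (pvec d) ≤ Real.sqrt ((d : ℝ) + 2) := by
      apply Real.sSup_le
      · rintro x ⟨ε, hε, rfl⟩
        exact signsum_le_aux d hd ε hε
      · positivity
    have hlt : Real.sqrt ((d : ℝ) + 2) < ((d : ℝ) + 1) / Real.sqrt d := by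
      rw [lt_div_iff₀ hsd, ← Real.sqrt_mul (by positivity)]
      calc Real.sqrt (((d : ℝ) + 2) * d) < Real.sqrt (((d : ℝ) + 1) ^ 2) := by
            apply Real.sqrt_lt_sqrt (by positivity)
            nlinarith
        _ = (d : ℝ) + 1 := Real.sqrt_sq (by positivity)
    have : (1 / 2 : ℝ) * signMax (pvec d) ≤ (1 / 2) * Real.sqrt ((d : ℝ) + 2) := by
      linarith
    calc (1 / 2 : ℝ) * signMax (pvec d) ≤ (1 / 2) * Real.sqrt ((d : ℝ) + 2) := this
      _ < (1 / 2) * (((d : ℝ) + 1) / Real.sqrt d) := by linarith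
      _ = ((d : ℝ) + 1) / (2 * Real.sqrt d) := by ring
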